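/- Let G be a finite group and let g_1, …, g_n be distinct elements forming an independent subset of G. Then the map sending each subset I of {1,…,n} to the subgroup ⟨g_i : i ∈ I⟩ generated by the corresponding elements is an embedding of the Boolean lattice B(n) as a join-semilattice in the subgroup lattice of G. -/

import Mathlib

/-- A base: the pointwise stabiliser of the sequence equals the kernel of the action. -/
def IsBase (G : Type) [Group G] {Ω : Type} [MulAction G Ω] {k : ℕ} (b : Fin k → Ω) : Prop :=
  ∀ g : G, (∀ i, g • b i = b i) → ∀ ω : Ω, g • ω = ω

/-- Irredundant: no point is fixed by the pointwise stabiliser of its predecessors. -/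
def IsIrredundant (G : Type) [Group G] {Ω : Type} [MulAction G Ω] {k : ℕ} (b : Fin k → Ω) : Prop :=
  ∀ i : Fin k, ∃ g : G, (∀ j, j < i → g • b j = b j) ∧ g • b i ≠ b i

/-- Minimal: no point is fixed by the pointwise stabiliser of the other points. -/
def IsMinimal (G : Type) [Group G] {Ω : Type} [MulAction G Ω] {k : ℕ} (b : Fin k → Ω) : Prop :=
  ∀ i : Fin k, ∃ g : G, (∀ j, j ≠ i → g • b j = b j) ∧ g • b i ≠ b i

noncomputable def b1 (G : Type) [Group G] : ℕ :=
  sSup {k | ∃ (Ω : Type) (_ : Finite Ω) (m : MulAction G Ω), ∃ b : Fin k → Ω,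
    @IsBase G _ Ω m k b ∧ @IsIrredundant G _ Ω m k b}

noncomputable def b2 (G : Type) [Group G] : ℕ :=
  sSup {k | ∃ (Ω : Type) (_ : Finite Ω) (m : MulAction G Ω), ∃ b : Fin k → Ω,
    @IsBase G _ Ω m k b ∧ @IsMinimal G _ Ω m k b}

noncomputable def minBaseSize (G : Type) [Group G] (Ω : Type) [MulAction G Ω] : ℕ :=
  sInf {k | ∃ b : Fin k → Ω, IsBase G b}

noncomputable def b3 (G : Type) [Group G] : ℕ :=
  sSup {k | ∃ (Ω : Type) (_ : Finite Ω) (m : MulAction G Ω), k = @minBaseSize G _ Ω m}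

/-- The length of the longest chain of subgroups of `G`. -/
noncomputable def subgroupChainLength (G : Type) [Group G] : ℕ :=
  sSup {l | ∃ c : Fin (l + 1) → Subgroup G, StrictAnti c ∧ c 0 = ⊤ ∧ c (Fin.last l) = ⊥}

def IsFaithfulAction (G Ω : Type) [Group G] [MulAction G Ω] : Prop :=
  ∀ g : G, (∀ ω : Ω, g • ω = ω) → g = 1

def IsTransitiveAction (G Ω : Type) [Group G] [MulAction G Ω] : Prop :=
  ∀ x y : Ω, ∃ g : G, g • x = y

def IsPrimitiveAction (G Ω : Type) [Group G] [MulAction G Ω] : Prop :=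
  IsTransitiveAction G Ω ∧ Nontrivial Ω ∧
    ∀ r : Setoid Ω, (∀ (g : G) (x y : Ω), r.r x y → r.r (g • x) (g • y)) → r = ⊥ ∨ r = ⊤

def IsIndependent (G : Type) [Group G] (S : Finset G) : Prop :=
  ∀ g ∈ S, g ∉ Subgroup.closure ((S : Set G) \ {g})

noncomputable def maxIndependent (G : Type) [Group G] : ℕ :=
  sSup {n | ∃ S : Finset G, S.card = n ∧ IsIndependent G S}

def IsJoinEmbedding (G : Type) [Group G] (n : ℕ) (f : Finset (Fin n) → Subgroup G) : Prop :=
  Function.Injective f ∧ f ∅ = ⊥ ∧ ∀ I J, f (I ∪ J) = f I ⊔ f J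

def IsMeetEmbedding (G : Type) [Group G] (n : ℕ) (f : Finset (Fin n) → Subgroup G) : Prop :=
  Function.Injective f ∧ f ∅ = ⊤ ∧ ∀ I J, f (I ∪ J) = f I ⊓ f J

/-- an independent family of n distinct elements gives a join-semilattice
embedding of B(n) via I ↦ ⟨g_i : i ∈ I⟩. -/
theorem independent_gives_joinEmbedding (G : Type) [Group G] [Finite G] (n : ℕ)
    (g : Fin n → G) (hinj : Function.Injective g)
    (hind : ∀ i : Fin n, g i ∉ Subgroup.closure (g '' {j | j ≠ i})) :
    IsJoinEmbedding G n (fun I : Finset (Fin n) =>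
      Subgroup.closure (g '' (I : Set (Fin n)))) := by
  refine ⟨?_, by simp, ?_⟩
  · have key : ∀ I J : Finset (Fin n),
        Subgroup.closure (g '' (I : Set (Fin n))) =
          Subgroup.closure (g '' (J : Set (Fin n))) → I ⊆ J := by
      intro I J h i hi
      by_contra hij
      apply hind i
      have h1 : g i ∈ Subgroup.closure (g '' (J : Set (Fin n))) := by
        rw [← h]
        exact Subgroup.subset_closure ⟨i, hi, rfl⟩
      refine Subgroup.closure_mono (Set.image_mono (f := g) ?_) h1
      intro j hj hji
      exact hij (by simpa [Set.mem_singleton_iff.mp hji] using hj)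
    intro I J h
    exact Finset.Subset.antisymm (key I J h) (key J I h.symm)
  · intro I J
    simp [Set.image_union, Subgroup.closure_union]
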